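/- Let n = n₀ + n₁ with n₀, n₁ ≥ 1, and let N₀, N₁ be a partition of {1, …, n} with |N₀| = n₀ and |N₁| = n₁. Let f, f^1, …, f^n : ℝ^d → ℝ be differentiable, each with L-Lipschitz gradient, and suppose f attains its global minimum at x* ∈ ℝ^d. Assume the balanced-distribution bounds: for all x, (1/n₀)∑_{i ∈ N₀} ‖∇f^i(x) − ∇f(x)‖² ≤ ς₀² and (1/n₁)∑_{i ∈ N₁} ‖∇f^i(x) − ∇f(x)‖² ≤ ς₁². Then for any α₀ ≥ α₁ > 0 and any points x_1, …, x_n ∈ ℝ^d with mean μ = (1/n)∑_i x_i and Γ = (1/n)∑_i ‖x_i − μ‖², one has (α₀/n)∑_{i ∈ N₀} ‖∇f^i(x_i)‖² + (α₁/n)∑_{i ∈ N₁} ‖∇f^i(x_i)‖² ≤ 3L²α₀Γ + (3α₀n₀ς₀² + 3α₁n₁ς₁²)/n + 6(α₀ + α₁)L(f(μ) − f(x*)). -/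

import Mathlib

open Finset InnerProductSpace intervalIntegral

noncomputable section HDOAux
variable {F : Type*} [NormedAddCommGroup F] [InnerProductSpace ℝ F] [CompleteSpace F]

lemma grad_cont (f : F → ℝ) (L : ℝ) (hL : 0 < L)
    (hLip : ∀ x y, ‖gradient f x - gradient f y‖ ≤ L * ‖x - y‖) :
    Continuous (gradient f) := by
  have : LipschitzWith L.toNNReal (gradient f) := by
    apply LipschitzWith.of_dist_le_mul
    intro x y
    simpa [dist_eq_norm, Real.coe_toNNReal L hL.le] using hLip x y
  exact this.continuous

lemma descent_lemma (f : F → ℝ) (L : ℝ) (hL : 0 < L) (hf : Differentiable ℝ f)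
    (hLip : ∀ x y, ‖gradient f x - gradient f y‖ ≤ L * ‖x - y‖) (x y : F) :
    f y ≤ f x + inner ℝ (gradient f x) (y - x) + L / 2 * ‖y - x‖ ^ 2 := by
  set v := y - x with hv
  set g' : ℝ → ℝ := fun t => inner ℝ (gradient f (x + t • v)) v with hg'
  have hderiv : ∀ t : ℝ, HasDerivAt (fun t : ℝ => f (x + t • v)) (g' t) t := by
    intro t
    have hc : HasDerivAt (fun t : ℝ => x + t • v) v t := by
      simpa using ((hasDerivAt_id t).smul_const v).const_add x
    have hF : HasFDerivAt f (toDual ℝ F (gradient f (x + t • v))) (x + t • v) :=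
      (hf (x + t • v)).hasGradientAt
    have := hF.comp_hasDerivAt t hc
    rw [toDual_apply_apply] at this
    exact this
  have hcont : Continuous g' :=
    ((grad_cont f L hL hLip).comp (by continuity)).inner continuous_const
  have hFTC : ∫ t in (0:ℝ)..1, g' t = f (x + (1:ℝ) • v) - f (x + (0:ℝ) • v) := by
    exact integral_eq_sub_of_hasDerivAt (fun t _ => hderiv t)
      (hcont.intervalIntegrable 0 1)
  have hbound : ∀ t ∈ Set.Icc (0:ℝ) 1, g' t ≤ g' 0 + L * t * ‖v‖ ^ 2 := by
    intro t ht
    have h1 : g' t - g' 0 = inner ℝ (gradient f (x + t • v) - gradient f (x + (0:ℝ) • v)) v := by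
      simp [hg', inner_sub_left]
    have h2 : inner ℝ (gradient f (x + t • v) - gradient f (x + (0:ℝ) • v)) v
        ≤ ‖gradient f (x + t • v) - gradient f (x + (0:ℝ) • v)‖ * ‖v‖ :=
      real_inner_le_norm _ _
    have h3 : ‖gradient f (x + t • v) - gradient f (x + (0:ℝ) • v)‖ ≤ L * (t * ‖v‖) := by
      have := hLip (x + t • v) (x + (0:ℝ) • v)
      simpa [norm_smul, abs_of_nonneg ht.1] using this
    nlinarith [norm_nonneg v, mul_le_mul_of_nonneg_right h3 (norm_nonneg v)]
  have hint : ∫ t in (0:ℝ)..1, g' t ≤ ∫ t in (0:ℝ)..1, (g' 0 + L * t * ‖v‖ ^ 2) := by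
    apply integral_mono_on (by norm_num) (hcont.intervalIntegrable 0 1)
      ((by continuity : Continuous fun t : ℝ => g' 0 + L * t * ‖v‖ ^ 2).intervalIntegrable 0 1)
    exact hbound
  have hval : ∫ t in (0:ℝ)..1, (g' 0 + L * t * ‖v‖ ^ 2) = g' 0 + L / 2 * ‖v‖ ^ 2 := by
    rw [intervalIntegral.integral_add (continuous_const.intervalIntegrable 0 1)
      ((by continuity : Continuous fun t : ℝ => L * t * ‖v‖ ^ 2).intervalIntegrable 0 1)]
    have h2 : ∫ t in (0:ℝ)..1, L * t * ‖v‖ ^ 2 = (L * ‖v‖ ^ 2) * ∫ t in (0:ℝ)..1, t := by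
      rw [← intervalIntegral.integral_const_mul]
      congr 1; ext t; ring
    rw [h2, integral_id]
    simp; ring
  have hg'0 : g' 0 = inner ℝ (gradient f x) v := by simp [hg']
  have h1 : f y - f x = ∫ t in (0:ℝ)..1, g' t := by
    rw [hFTC]; simp [hv]
  have key : f y - f x ≤ inner ℝ (gradient f x) v + L / 2 * ‖v‖ ^ 2 := by
    rw [h1, ← hg'0]
    exact hint.trans_eq hval
  linarith

lemma grad_sq_le_gap (f : F → ℝ) (L : ℝ) (hL : 0 < L) (hf : Differentiable ℝ f)
    (hLip : ∀ x y, ‖gradient f x - gradient f y‖ ≤ L * ‖x - y‖)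
    (xstar : F) (hmin : ∀ y, f xstar ≤ f y) (x : F) :
    ‖gradient f x‖ ^ 2 ≤ 2 * L * (f x - f xstar) := by
  have h := descent_lemma f L hL hf hLip x (x - L⁻¹ • gradient f x)
  have h2 : (x - L⁻¹ • gradient f x) - x = -(L⁻¹ • gradient f x) := by abel
  rw [h2] at h
  have hi : (inner ℝ (gradient f x) (-(L⁻¹ • gradient f x)) : ℝ)
      = -(L⁻¹ * ‖gradient f x‖ ^ 2) := by
    rw [inner_neg_right, real_inner_smul_right, real_inner_self_eq_norm_sq]
  have hn : ‖-(L⁻¹ • gradient f x)‖ ^ 2 = L⁻¹ ^ 2 * ‖gradient f x‖ ^ 2 := by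
    rw [norm_neg, norm_smul]
    simp [abs_of_nonneg (inv_nonneg.mpr hL.le), mul_pow]
  rw [hi, hn] at h
  have hst := hmin (x - L⁻¹ • gradient f x)
  set G := ‖gradient f x‖ ^ 2 with hG
  have h3 : L / 2 * (L⁻¹ ^ 2 * G) = (L⁻¹ * G) / 2 := by
    field_simp
  have hcomb : L⁻¹ * G ≤ 2 * (f x - f xstar) := by linarith
  have h5 := mul_le_mul_of_nonneg_left hcomb hL.le
  have h4 : L * (L⁻¹ * G) = G := by
    field_simp
  linarith

lemma norm_sq_le_three (a b c : F) :
    ‖a‖ ^ 2 ≤ 3 * ‖a - b‖ ^ 2 + 3 * ‖b - c‖ ^ 2 + 3 * ‖c‖ ^ 2 := by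
  have h : ‖a‖ ≤ ‖a - b‖ + ‖b - c‖ + ‖c‖ := by
    calc ‖a‖ = ‖(a - b) + (b - c) + c‖ := by congr 1; abel
    _ ≤ ‖a - b‖ + ‖b - c‖ + ‖c‖ := norm_add₃_le
  have hsq : ‖a‖ ^ 2 ≤ (‖a - b‖ + ‖b - c‖ + ‖c‖) ^ 2 := by
    have := pow_le_pow_left₀ (norm_nonneg a) h 2
    exact this
  nlinarith [sq_nonneg (‖a - b‖ - ‖b - c‖), sq_nonneg (‖a - b‖ - ‖c‖), sq_nonneg (‖b - c‖ - ‖c‖)]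


end HDOAux


set_option maxHeartbeats 1000000 in
/-- Weighted bound on the average squared gradient norms of the local
objectives at the local models (convex case, Lemma `M^f`): with `μ` the mean of the local
models and `Γ` their variance potential,
`(α₀/n)∑_{i∈N₀}‖∇f^i(x_i)‖² + (α₁/n)∑_{i∈N₁}‖∇f^i(x_i)‖²
  ≤ 3L²α₀Γ + (3α₀n₀ς₀² + 3α₁n₁ς₁²)/n + 6(α₀+α₁)L(f(μ) − f(x*))`. -/
theorem hdo_weighted_gradient_bound_convex (d n₀ n₁ : ℕ) (hn₀ : 1 ≤ n₀) (hn₁ : 1 ≤ n₁)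
    (N₀ : Finset (Fin (n₀ + n₁))) (hcard : N₀.card = n₀)
    (L ς₀ ς₁ α₀ α₁ : ℝ) (hL : 0 < L) (hα₁ : 0 < α₁) (hα : α₁ ≤ α₀)
    (f : EuclideanSpace ℝ (Fin d) → ℝ)
    (fi : Fin (n₀ + n₁) → EuclideanSpace ℝ (Fin d) → ℝ)
    (hf : Differentiable ℝ f) (hfi : ∀ i, Differentiable ℝ (fi i))
    (hLipf : ∀ x y, ‖gradient f x - gradient f y‖ ≤ L * ‖x - y‖)
    (hLipfi : ∀ i x y, ‖gradient (fi i) x - gradient (fi i) y‖ ≤ L * ‖x - y‖)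
    (xstar : EuclideanSpace ℝ (Fin d)) (hmin : ∀ y, f xstar ≤ f y)
    (hς₀ : ∀ x, (n₀ : ℝ)⁻¹ * ∑ i ∈ N₀, ‖gradient (fi i) x - gradient f x‖ ^ 2 ≤ ς₀ ^ 2)
    (hς₁ : ∀ x, (n₁ : ℝ)⁻¹ * ∑ i ∈ N₀ᶜ, ‖gradient (fi i) x - gradient f x‖ ^ 2 ≤ ς₁ ^ 2)
    (xs : Fin (n₀ + n₁) → EuclideanSpace ℝ (Fin d)) :
    let n : ℕ := n₀ + n₁
    let μ : EuclideanSpace ℝ (Fin d) := (n : ℝ)⁻¹ • ∑ i, xs i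
    let Γ : ℝ := (n : ℝ)⁻¹ * ∑ i, ‖xs i - μ‖ ^ 2
    α₀ / (n : ℝ) * ∑ i ∈ N₀, ‖gradient (fi i) (xs i)‖ ^ 2
        + α₁ / (n : ℝ) * ∑ i ∈ N₀ᶜ, ‖gradient (fi i) (xs i)‖ ^ 2
      ≤ 3 * L ^ 2 * α₀ * Γ + (3 * α₀ * n₀ * ς₀ ^ 2 + 3 * α₁ * n₁ * ς₁ ^ 2) / (n : ℝ)
        + 6 * (α₀ + α₁) * L * (f μ - f xstar) := by
  intro n μ Γ
  have hα₀ : 0 < α₀ := lt_of_lt_of_le hα₁ hα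
  have hn₀' : (0:ℝ) < n₀ := by exact_mod_cast hn₀
  have hn₁' : (0:ℝ) < n₁ := by exact_mod_cast hn₁
  have hn : (0:ℝ) < (n : ℝ) := by positivity
  have hNc : (N₀ᶜ).card = n₁ := by
    rw [Finset.card_compl, hcard]
    simp [n]
  -- abbreviations
  set G : ℝ := ‖gradient f μ‖ ^ 2 with hGdef
  set S0 : ℝ := ∑ i ∈ N₀, ‖xs i - μ‖ ^ 2 with hS0
  set S1 : ℝ := ∑ i ∈ N₀ᶜ, ‖xs i - μ‖ ^ 2 with hS1
  set D0 : ℝ := ∑ i ∈ N₀, ‖gradient (fi i) μ - gradient f μ‖ ^ 2 with hD0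
  set D1 : ℝ := ∑ i ∈ N₀ᶜ, ‖gradient (fi i) μ - gradient f μ‖ ^ 2 with hD1
  set A0 : ℝ := ∑ i ∈ N₀, ‖gradient (fi i) (xs i)‖ ^ 2 with hA0def
  set A1 : ℝ := ∑ i ∈ N₀ᶜ, ‖gradient (fi i) (xs i)‖ ^ 2 with hA1def
  -- pointwise bound
  have key : ∀ i : Fin (n₀ + n₁), ‖gradient (fi i) (xs i)‖ ^ 2
      ≤ 3 * L ^ 2 * ‖xs i - μ‖ ^ 2 + 3 * ‖gradient (fi i) μ - gradient f μ‖ ^ 2 + 3 * G := by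
    intro i
    have h3 := norm_sq_le_three (gradient (fi i) (xs i)) (gradient (fi i) μ) (gradient f μ)
    have hlip := hLipfi i (xs i) μ
    have hsq : ‖gradient (fi i) (xs i) - gradient (fi i) μ‖ ^ 2 ≤ L ^ 2 * ‖xs i - μ‖ ^ 2 := by
      have := pow_le_pow_left₀ (norm_nonneg _) hlip 2
      calc ‖gradient (fi i) (xs i) - gradient (fi i) μ‖ ^ 2 ≤ (L * ‖xs i - μ‖) ^ 2 := this
        _ = L ^ 2 * ‖xs i - μ‖ ^ 2 := by ring
    linarith
  -- summed bounds
  have sum0 : A0 ≤ 3 * L ^ 2 * S0 + 3 * D0 + 3 * n₀ * G := by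
    calc A0 ≤ ∑ i ∈ N₀, (3 * L ^ 2 * ‖xs i - μ‖ ^ 2
          + 3 * ‖gradient (fi i) μ - gradient f μ‖ ^ 2 + 3 * G) :=
        Finset.sum_le_sum fun i _ => key i
      _ = 3 * L ^ 2 * S0 + 3 * D0 + 3 * n₀ * G := by
        rw [Finset.sum_add_distrib, Finset.sum_add_distrib, ← Finset.mul_sum, ← Finset.mul_sum,
          Finset.sum_const, hcard]
        push_cast; ring
  have sum1 : A1 ≤ 3 * L ^ 2 * S1 + 3 * D1 + 3 * n₁ * G := by
    calc A1 ≤ ∑ i ∈ N₀ᶜ, (3 * L ^ 2 * ‖xs i - μ‖ ^ 2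
          + 3 * ‖gradient (fi i) μ - gradient f μ‖ ^ 2 + 3 * G) :=
        Finset.sum_le_sum fun i _ => key i
      _ = 3 * L ^ 2 * S1 + 3 * D1 + 3 * n₁ * G := by
        rw [Finset.sum_add_distrib, Finset.sum_add_distrib, ← Finset.mul_sum, ← Finset.mul_sum,
          Finset.sum_const, hNc]
        push_cast; ring
  -- dissimilarity bounds
  have hDb0 : D0 ≤ n₀ * ς₀ ^ 2 := by
    have h := hς₀ μ
    rw [inv_mul_le_iff₀ hn₀'] at h
    linarith
  have hDb1 : D1 ≤ n₁ * ς₁ ^ 2 := by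
    have h := hς₁ μ
    rw [inv_mul_le_iff₀ hn₁'] at h
    linarith
  -- gradient gap bound
  have hGb : G ≤ 2 * L * (f μ - f xstar) :=
    grad_sq_le_gap f L hL hf hLipf xstar hmin μ
  have hgap : 0 ≤ f μ - f xstar := sub_nonneg.mpr (hmin μ)
  -- variance decomposition
  have hΓ : Γ * (n : ℝ) = S0 + S1 := by
    have hsplit : ∑ i, ‖xs i - μ‖ ^ 2 = S0 + S1 :=
      (Finset.sum_add_sum_compl N₀ _).symm
    show (n : ℝ)⁻¹ * (∑ i, ‖xs i - μ‖ ^ 2) * (n : ℝ) = S0 + S1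
    rw [hsplit]
    field_simp
  -- nonnegativity
  have hS0n : 0 ≤ S0 := Finset.sum_nonneg fun i _ => by positivity
  have hS1n : 0 ≤ S1 := Finset.sum_nonneg fun i _ => by positivity
  have hGn : (0:ℝ) ≤ G := by positivity
  -- combine, clearing denominators
  rw [div_eq_mul_inv, div_eq_mul_inv, div_eq_mul_inv]
  have hninv : (0:ℝ) < (n : ℝ)⁻¹ := by positivity
  have hΓ' : Γ = (n : ℝ)⁻¹ * (S0 + S1) := by
    field_simp at hΓ ⊢
    linarith [hΓ]
  have hcast : ((n : ℕ) : ℝ) = (n₀ : ℝ) + (n₁ : ℝ) := by push_cast [n]; ring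
  -- main numeric estimate
  have step1 : α₀ * A0 + α₁ * A1
      ≤ 3 * L ^ 2 * α₀ * (S0 + S1) + 3 * α₀ * n₀ * ς₀ ^ 2 + 3 * α₁ * n₁ * ς₁ ^ 2
        + (3 * (α₀ * n₀ + α₁ * n₁)) * (2 * L * (f μ - f xstar)) := by
    have h1 := mul_le_mul_of_nonneg_left sum0 hα₀.le
    have h2 := mul_le_mul_of_nonneg_left sum1 hα₁.le
    have h3 : α₁ * (3 * L ^ 2 * S1) ≤ α₀ * (3 * L ^ 2 * S1) := by
      apply mul_le_mul_of_nonneg_right hα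
      exact mul_nonneg (mul_nonneg (by norm_num) (sq_nonneg L)) hS1n
    have h4 : α₀ * (3 * D0) ≤ α₀ * (3 * (n₀ * ς₀ ^ 2)) := by
      apply mul_le_mul_of_nonneg_left _ hα₀.le
      linarith
    have h5 : α₁ * (3 * D1) ≤ α₁ * (3 * (n₁ * ς₁ ^ 2)) := by
      apply mul_le_mul_of_nonneg_left _ hα₁.le
      linarith
    have h6 : α₀ * (3 * n₀ * G) ≤ α₀ * (3 * n₀ * (2 * L * (f μ - f xstar))) := by
      apply mul_le_mul_of_nonneg_left _ hα₀.le
      have : (0:ℝ) ≤ 3 * n₀ := by positivity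
      calc 3 * (n₀:ℝ) * G ≤ 3 * n₀ * (2 * L * (f μ - f xstar)) :=
        mul_le_mul_of_nonneg_left hGb this
      _ = _ := rfl
    have h7 : α₁ * (3 * n₁ * G) ≤ α₁ * (3 * n₁ * (2 * L * (f μ - f xstar))) := by
      apply mul_le_mul_of_nonneg_left _ hα₁.le
      have : (0:ℝ) ≤ 3 * n₁ := by positivity
      exact mul_le_mul_of_nonneg_left hGb this
    nlinarith [h1, h2, h3, h4, h5, h6, h7]
  -- multiply step1 by n⁻¹ and finish
  have step2 := mul_le_mul_of_nonneg_left step1 hninv.le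
  have hw : (n : ℝ)⁻¹ * (3 * (α₀ * n₀ + α₁ * n₁)) ≤ 3 * (α₀ + α₁) := by
    rw [inv_mul_le_iff₀ hn, hcast]
    nlinarith [mul_le_mul_of_nonneg_right hα hn₁'.le]
  have hw2 : (n : ℝ)⁻¹ * (3 * (α₀ * n₀ + α₁ * n₁)) * (2 * L * (f μ - f xstar))
      ≤ 3 * (α₀ + α₁) * (2 * L * (f μ - f xstar)) := by
    apply mul_le_mul_of_nonneg_right hw
    positivity
  have hΓuse : (n : ℝ)⁻¹ * (3 * L ^ 2 * α₀ * (S0 + S1)) = 3 * L ^ 2 * α₀ * Γ := by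
    rw [hΓ']; ring
  nlinarith [step2, hw2, hΓuse]
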